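/- Let X and Y be finite sets, μ a probability measure on X with μ(x) > 0 for all x, ν a probability measure on Y with ν(y) > 0 for all y, and R : X × Y → [0,∞) with Σ_y R(x,y) > 0 for every x and Σ_x R(x,y) > 0 for every y. Let (φ_n)_{n≥0} be the Sinkhorn iterates φ_{n+1} = ((φ_n)⁺)⁻ starting from any φ₀ : Y → ℝ, with Y-marginals ρ_n(y) = Σ_x e^{φ_n(y) − (φ_n)⁺(x)} R(x,y). Then the relative entropies decrease: H(ρ_{n+1}|ν) ≤ H(ρ_n|ν) for all n ≥ 0. -/

import Mathlib

open scoped BigOperators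

/-- The `+`-transform: `φ⁺(x) = ln( Σ_y e^{φ(y)} R(x,y) / μ(x) )`. -/
noncomputable def plusT {X Y : Type*} [Fintype Y] (μ : X → ℝ) (R : X → Y → ℝ)
    (φ : Y → ℝ) (x : X) : ℝ :=
  Real.log ((∑ y, Real.exp (φ y) * R x y) / μ x)

/-- The `−`-transform: `ψ⁻(y) = −ln( Σ_x e^{−ψ(x)} R(x,y) / ν(y) )`. -/
noncomputable def minusT {X Y : Type*} [Fintype X] (ν : Y → ℝ) (R : X → Y → ℝ)
    (ψ : X → ℝ) (y : Y) : ℝ :=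
  -Real.log ((∑ x, Real.exp (-ψ x) * R x y) / ν y)

/-- The coupling `π(φ)(x,y) = e^{φ(y) − φ⁺(x)} R(x,y)`. -/
noncomputable def coupling {X Y : Type*} [Fintype Y] (μ : X → ℝ) (R : X → Y → ℝ)
    (φ : Y → ℝ) (x : X) (y : Y) : ℝ :=
  Real.exp (φ y - plusT μ R φ x) * R x y

/-- Log-sum inequality. -/
private lemma logSum_ineq {ι : Type*} [Fintype ι] (p q : ι → ℝ)
    (hp : ∀ i, 0 ≤ p i) (hq : ∀ i, 0 ≤ q i) (h0 : ∀ i, q i = 0 → p i = 0) :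
    (∑ i, p i) * Real.log ((∑ i, p i) / (∑ i, q i)) ≤
      ∑ i, p i * Real.log (p i / q i) := by
  set P := ∑ i, p i with hP
  set Q := ∑ i, q i with hQdef
  have hQ0 : 0 ≤ Q := Finset.sum_nonneg fun i _ => hq i
  rcases eq_or_lt_of_le hQ0 with hQ | hQ
  · have hqz : ∀ i ∈ Finset.univ, q i = 0 :=
      (Finset.sum_eq_zero_iff_of_nonneg (fun i _ => hq i)).1 hQ.symm
    have hPz : P = 0 := Finset.sum_eq_zero fun i hi => h0 i (hqz i hi)
    rw [hPz, zero_mul]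
    refine Finset.sum_nonneg fun i hi => ?_
    rw [h0 i (hqz i hi), zero_mul]
  · set t := Finset.univ.filter (fun i => 0 < q i) with ht
    have hqt : ∀ i ∉ t, q i = 0 := by
      intro i hi
      rcases (hq i).eq_or_lt with h | h
      · exact h.symm
      · exact absurd (Finset.mem_filter.2 ⟨Finset.mem_univ i, h⟩) hi
    have hqpos : ∀ i ∈ t, 0 < q i := fun i hi => (Finset.mem_filter.1 hi).2
    have hPt : P = ∑ i ∈ t, p i :=
      (Finset.sum_subset (Finset.subset_univ t) (fun i _ hi => h0 i (hqt i hi))).symm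
    have hQt : Q = ∑ i ∈ t, q i :=
      (Finset.sum_subset (Finset.subset_univ t) (fun i _ hi => hqt i hi)).symm
    have hRHS : ∑ i, p i * Real.log (p i / q i) = ∑ i ∈ t, p i * Real.log (p i / q i) := by
      refine (Finset.sum_subset (Finset.subset_univ t) (fun i _ hi => ?_)).symm
      rw [h0 i (hqt i hi), zero_mul]
    have hw0 : ∀ i ∈ t, 0 ≤ q i / Q := fun i _ => div_nonneg (hq i) hQ.le
    have hw1 : ∑ i ∈ t, q i / Q = 1 := by
      rw [← Finset.sum_div, ← hQt, div_self hQ.ne']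
    have hmem : ∀ i ∈ t, p i / q i ∈ Set.Ici (0:ℝ) := fun i hi =>
      div_nonneg (hp i) (hq i)
    have hjen := Real.convexOn_mul_log.map_sum_le hw0 hw1 hmem
    have hz : ∑ i ∈ t, (q i / Q) • (p i / q i) = P / Q := by
      rw [hPt, Finset.sum_div]
      refine Finset.sum_congr rfl fun i hi => ?_
      have hqi := (hqpos i hi).ne'
      field_simp
      rw [smul_eq_mul, ← mul_assoc, mul_div_cancel₀ _ hQ.ne', mul_div_cancel₀ _ hqi]
    rw [hz] at hjen
    have hineq := mul_le_mul_of_nonneg_left hjen hQ.le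
    calc P * Real.log (P / Q) = Q * (P / Q * Real.log (P / Q)) := by
          rw [← mul_assoc, mul_div_cancel₀ _ hQ.ne']
      _ ≤ Q * ∑ i ∈ t, (q i / Q) • ((p i / q i) * Real.log (p i / q i)) := hineq
      _ = ∑ i ∈ t, p i * Real.log (p i / q i) := by
          rw [Finset.mul_sum]
          refine Finset.sum_congr rfl fun i hi => ?_
          have hqi := (hqpos i hi).ne'
          rw [smul_eq_mul]
          field_simp
      _ = ∑ i, p i * Real.log (p i / q i) := hRHS.symm

/-- along the Sinkhorn iterates, the relative entropies of the
`Y`-marginals decrease: `H(ρ_{n+1}|ν) ≤ H(ρ_n|ν)` for all `n ≥ 0`. -/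
theorem sinkhorn_relativeEntropy_decreasing {X Y : Type*} [Fintype X] [Fintype Y]
    (μ : X → ℝ) (ν : Y → ℝ) (R : X → Y → ℝ)
    (hμpos : ∀ x, 0 < μ x) (hμ : ∑ x, μ x = 1)
    (hνpos : ∀ y, 0 < ν y) (hν : ∑ y, ν y = 1)
    (hR : ∀ x y, 0 ≤ R x y)
    (hrow : ∀ x, 0 < ∑ y, R x y) (hcol : ∀ y, 0 < ∑ x, R x y)
    (φ : ℕ → Y → ℝ)
    (hiter : ∀ n, φ (n + 1) = minusT ν R (plusT μ R (φ n)))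
    (ρ : ℕ → Y → ℝ) (hρ : ∀ n y, ρ n y = ∑ x, coupling μ R (φ n) x y) :
    ∀ n : ℕ, ∑ y, ρ (n + 1) y * Real.log (ρ (n + 1) y / ν y) ≤
      ∑ y, ρ n y * Real.log (ρ n y / ν y) := by
  have hSrow : ∀ (f : Y → ℝ) (x : X), 0 < ∑ y, Real.exp (f y) * R x y := by
    intro f x
    have h0 : ∑ y : Y, (0:ℝ) < ∑ y, R x y := by simpa using hrow x
    obtain ⟨y, -, hy⟩ := Finset.exists_lt_of_sum_lt h0
    exact Finset.sum_pos' (fun y _ => mul_nonneg (Real.exp_pos _).le (hR x y))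
      ⟨y, Finset.mem_univ y, mul_pos (Real.exp_pos _) hy⟩
  have hScol : ∀ (g : X → ℝ) (y : Y), 0 < ∑ x, Real.exp (-g x) * R x y := by
    intro g y
    have h0 : ∑ x : X, (0:ℝ) < ∑ x, R x y := by simpa using hcol y
    obtain ⟨x, -, hx⟩ := Finset.exists_lt_of_sum_lt h0
    exact Finset.sum_pos' (fun x _ => mul_nonneg (Real.exp_pos _).le (hR x y))
      ⟨x, Finset.mem_univ x, mul_pos (Real.exp_pos _) hx⟩
  have hexp_plus : ∀ (f : Y → ℝ) (x : X),
      Real.exp (plusT μ R f x) = (∑ y, Real.exp (f y) * R x y) / μ x := fun f x =>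
    Real.exp_log (div_pos (hSrow f x) (hμpos x))
  have hexp_minus : ∀ (g : X → ℝ) (y : Y),
      Real.exp (-(minusT ν R g y)) = (∑ x, Real.exp (-g x) * R x y) / ν y := by
    intro g y
    rw [minusT, neg_neg]
    exact Real.exp_log (div_pos (hScol g y) (hνpos y))
  have hmarg : ∀ (f : Y → ℝ) (x : X), ∑ y, coupling μ R f x y = μ x := by
    intro f x
    have hS := hSrow f x
    calc ∑ y, coupling μ R f x y
        = (∑ y, Real.exp (f y) * R x y) / Real.exp (plusT μ R f x) := by
          rw [Finset.sum_div]
          refine Finset.sum_congr rfl fun y _ => ?_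
          rw [coupling, Real.exp_sub, div_mul_eq_mul_div]
      _ = μ x := by
          rw [hexp_plus, div_div_eq_mul_div, mul_comm, mul_div_assoc, div_self hS.ne',
            mul_one]
  intro n
  set ψ := plusT μ R (φ n) with hψ
  set φ' := φ (n + 1) with hφ'
  set ψ' := plusT μ R φ' with hψ'
  have hφ'eq : φ' = minusT ν R ψ := hiter n
  set πh : X → Y → ℝ := fun x y => Real.exp (φ' y - ψ x) * R x y with hπh
  have hπh_def : ∀ x y, πh x y = Real.exp (φ' y - ψ x) * R x y := fun _ _ => rfl
  have hTν : ∀ y, ∑ x, Real.exp (-ψ x) * R x y = ν y * Real.exp (-(φ' y)) := by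
    intro y
    have h := hexp_minus ψ y
    rw [← hφ'eq] at h
    rw [eq_div_iff (hνpos y).ne'] at h
    rw [← h]; ring
  have hπh_col : ∀ y, ∑ x, πh x y = ν y := by
    intro y
    calc ∑ x, πh x y = Real.exp (φ' y) * ∑ x, Real.exp (-ψ x) * R x y := by
          rw [Finset.mul_sum]
          refine Finset.sum_congr rfl fun x _ => ?_
          rw [hπh_def, sub_eq_add_neg, Real.exp_add, mul_assoc]
      _ = ν y := by
          rw [hTν, ← mul_assoc, mul_comm (Real.exp (φ' y)), mul_assoc,
            ← Real.exp_add, add_neg_cancel, Real.exp_zero, mul_one]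
  have hSφ' : ∀ x, ∑ y, Real.exp (φ' y) * R x y = μ x * Real.exp (ψ' x) := by
    intro x
    rw [hψ', hexp_plus φ' x]
    field_simp
    rw [mul_div_assoc, div_self (hμpos x).ne', mul_one]
  have hπh_row : ∀ x, ∑ y, πh x y = μ x * Real.exp (ψ' x - ψ x) := by
    intro x
    calc ∑ y, πh x y = Real.exp (-ψ x) * ∑ y, Real.exp (φ' y) * R x y := by
          rw [Finset.mul_sum]
          refine Finset.sum_congr rfl fun y _ => ?_
          rw [hπh_def, sub_eq_add_neg, add_comm, Real.exp_add, mul_assoc]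
      _ = μ x * Real.exp (ψ' x - ψ x) := by
          rw [hSφ', Real.exp_sub, Real.exp_neg, div_eq_mul_inv]
          ring
  have hρν : ∀ y, ρ n y = ν y * Real.exp (φ n y - φ' y) := by
    intro y
    rw [hρ n y]
    calc ∑ x, coupling μ R (φ n) x y
        = Real.exp (φ n y) * ∑ x, Real.exp (-ψ x) * R x y := by
          rw [Finset.mul_sum]
          refine Finset.sum_congr rfl fun x _ => ?_
          rw [coupling, ← hψ, sub_eq_add_neg, Real.exp_add, mul_assoc]
      _ = ν y * Real.exp (φ n y - φ' y) := by
          rw [hTν, Real.exp_sub, div_eq_mul_inv, Real.exp_neg]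
          ring
  -- Step 1
  have step1 : ∑ y, ρ (n + 1) y * Real.log (ρ (n + 1) y / ν y) ≤
      ∑ y, ∑ x, coupling μ R φ' x y * Real.log (coupling μ R φ' x y / πh x y) := by
    refine Finset.sum_le_sum fun y _ => ?_
    have h := logSum_ineq (fun x => coupling μ R φ' x y) (fun x => πh x y)
      (fun x => mul_nonneg (Real.exp_pos _).le (hR x y))
      (fun x => mul_nonneg (Real.exp_pos _).le (hR x y))
      (fun x hx => by
        have hRz : R x y = 0 := by
          by_contra hrz
          exact absurd hx (ne_of_gt (mul_pos (Real.exp_pos _)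
            (lt_of_le_of_ne (hR x y) (Ne.symm hrz))))
        simp only [coupling, hRz, mul_zero])
    rw [hπh_col y, ← hρ (n+1) y] at h
    exact h
  -- Step 2
  have step2 : ∑ y, ∑ x, coupling μ R φ' x y * Real.log (coupling μ R φ' x y / πh x y) =
      ∑ x, μ x * (ψ x - ψ' x) := by
    rw [Finset.sum_comm]
    refine Finset.sum_congr rfl fun x _ => ?_
    calc ∑ y, coupling μ R φ' x y * Real.log (coupling μ R φ' x y / πh x y)
        = ∑ y, coupling μ R φ' x y * (ψ x - ψ' x) := by
          refine Finset.sum_congr rfl fun y _ => ?_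
          by_cases hRz : R x y = 0
          · simp only [coupling, hRz, mul_zero, zero_mul]
          · have hRp : 0 < R x y := lt_of_le_of_ne (hR x y) (Ne.symm hRz)
            congr 1
            rw [hπh_def]
            simp only [coupling, ← hψ']
            rw [mul_div_mul_right _ _ hRp.ne', ← Real.exp_sub, Real.log_exp]
            ring
      _ = μ x * (ψ x - ψ' x) := by
          rw [← Finset.sum_mul, hmarg φ' x]
  -- Step 3
  have step3 : ∑ x, μ x * (ψ x - ψ' x) ≤
      ∑ x, ∑ y, coupling μ R (φ n) x y * Real.log (coupling μ R (φ n) x y / πh x y) := by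
    refine Finset.sum_le_sum fun x _ => ?_
    have h := logSum_ineq (fun y => coupling μ R (φ n) x y) (fun y => πh x y)
      (fun y => mul_nonneg (Real.exp_pos _).le (hR x y))
      (fun y => mul_nonneg (Real.exp_pos _).le (hR x y))
      (fun y hy => by
        have hRz : R x y = 0 := by
          by_contra hrz
          exact absurd hy (ne_of_gt (mul_pos (Real.exp_pos _)
            (lt_of_le_of_ne (hR x y) (Ne.symm hrz))))
        simp only [coupling, hRz, mul_zero])
    rw [hmarg (φ n) x, hπh_row x] at h
    have hlog : Real.log (μ x / (μ x * Real.exp (ψ' x - ψ x))) = ψ x - ψ' x := by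
      rw [div_mul_eq_div_div, div_self (hμpos x).ne', one_div, ← Real.exp_neg,
        Real.log_exp, neg_sub]
    rw [hlog] at h
    exact h
  -- Step 4
  have step4 : ∑ x, ∑ y, coupling μ R (φ n) x y * Real.log (coupling μ R (φ n) x y / πh x y) =
      ∑ y, ρ n y * Real.log (ρ n y / ν y) := by
    rw [Finset.sum_comm]
    refine Finset.sum_congr rfl fun y _ => ?_
    have hlogρ : Real.log (ρ n y / ν y) = φ n y - φ' y := by
      rw [hρν y, mul_comm, mul_div_assoc, div_self (hνpos y).ne', mul_one, Real.log_exp]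
    calc ∑ x, coupling μ R (φ n) x y * Real.log (coupling μ R (φ n) x y / πh x y)
        = ∑ x, coupling μ R (φ n) x y * (φ n y - φ' y) := by
          refine Finset.sum_congr rfl fun x _ => ?_
          by_cases hRz : R x y = 0
          · simp only [coupling, hRz, mul_zero, zero_mul]
          · have hRp : 0 < R x y := lt_of_le_of_ne (hR x y) (Ne.symm hRz)
            congr 1
            rw [hπh_def]
            simp only [coupling, ← hψ]
            rw [mul_div_mul_right _ _ hRp.ne', ← Real.exp_sub, Real.log_exp]
            ring
      _ = ρ n y * Real.log (ρ n y / ν y) := by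
          rw [← Finset.sum_mul, ← hρ n y, hlogρ]
  calc ∑ y, ρ (n + 1) y * Real.log (ρ (n + 1) y / ν y)
      ≤ ∑ y, ∑ x, coupling μ R φ' x y * Real.log (coupling μ R φ' x y / πh x y) := step1
    _ = ∑ x, μ x * (ψ x - ψ' x) := step2
    _ ≤ ∑ x, ∑ y, coupling μ R (φ n) x y * Real.log (coupling μ R (φ n) x y / πh x y) := step3
    _ = ∑ y, ρ n y * Real.log (ρ n y / ν y) := step4
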